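/- Let s > 1. Then for every y > 0 the function ψ_s is twice differentiable at y and −ψ_s''(y) + ψ_s(y) = ((2s−1)/(2(s−1))) · ψ_{s−1}(y). -/

import Mathlib

open MeasureTheory Real Filter Set

/-- The modified Bessel function of the second kind, for `y > 0` given by
`K_s(y) = ∫_0^∞ e^{−y·cosh t}·cosh(s·t) dt`. -/
noncomputable def besselK (s y : ℝ) : ℝ :=
  ∫ t in Set.Ioi (0 : ℝ), Real.exp (-(y * Real.cosh t)) * Real.cosh (s * t)

/-- `ψ_s(y) = (2^{1−s}/Γ(s))·|y|^s·K_s(|y|)` for `y ≠ 0`, and `ψ_s(0) = 1`. -/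
noncomputable def psi (s : ℝ) (y : ℝ) : ℝ :=
  if y = 0 then 1
  else (2 : ℝ) ^ (1 - s) / Real.Gamma s * |y| ^ s * besselK s |y|

/-- for `s > 1`, for every `y > 0` `ψ_s` is twice differentiable at `y` and
`−ψ_s''(y) + ψ_s(y) = ((2s−1)/(2(s−1)))·ψ_{s−1}(y)`. -/
-- auxiliary development
lemma cosh_le_exp_abs (x : ℝ) : Real.cosh x ≤ Real.exp |x| := by
  rw [Real.cosh_eq]
  have h1 : Real.exp x ≤ Real.exp |x| := Real.exp_le_exp.2 (le_abs_self x)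
  have h2 : Real.exp (-x) ≤ Real.exp |x| := Real.exp_le_exp.2 (neg_le_abs x)
  linarith

lemma abs_sinh_le_cosh (x : ℝ) : |Real.sinh x| ≤ Real.cosh x := by
  rw [Real.abs_sinh, ← Real.cosh_abs]
  have := Real.exp_pos (-|x|)
  rw [Real.sinh_eq, Real.cosh_eq]
  linarith

lemma key_bound (y b t : ℝ) (hy : 0 < y) (ht : 0 ≤ t) :
    Real.exp (-(y * Real.cosh t) + b * t) ≤ Real.exp (2*(b+1)^2/y) * Real.exp (-t) := by
  rw [← Real.exp_add]
  apply Real.exp_le_exp.2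
  have h1 : t/2 + 1 ≤ Real.exp (t/2) := Real.add_one_le_exp _
  have h2 : (t/2 + 1)^2 ≤ Real.exp t := by
    have h := mul_le_mul h1 h1 (by linarith) (le_of_lt (Real.exp_pos _))
    rw [← Real.exp_add, show t/2 + t/2 = t by ring] at h
    nlinarith
  have h4 : Real.exp t / 2 ≤ Real.cosh t := by
    rw [Real.cosh_eq]; have := Real.exp_pos (-t); linarith
  have h5 : y * (t^2/8) ≤ y * Real.cosh t := by
    apply mul_le_mul_of_nonneg_left _ hy.le; nlinarith
  have hineq : (b+1)*t - y*Real.cosh t ≤ 2*(b+1)^2/y := by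
    rw [le_div_iff₀ hy]
    nlinarith [sq_nonneg (y*t - 4*(b+1))]
  linarith

lemma integrable_aux (y b : ℝ) (hy : 0 < y) {g : ℝ → ℝ} (hg : Continuous g)
    (hb : ∀ t, 0 ≤ t → |g t| ≤ Real.exp (b*t)) :
    IntegrableOn (fun t => Real.exp (-(y * Real.cosh t)) * g t) (Ioi 0) := by
  apply Integrable.mono'
    (((exp_neg_integrableOn_Ioi 0 one_pos).const_mul (Real.exp (2*(b+1)^2/y))))
  · exact (((Real.continuous_exp.comp (by continuity)).mul hg)).aestronglyMeasurable
  · filter_upwards [ae_restrict_mem measurableSet_Ioi] with t ht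
    have ht0 : (0:ℝ) ≤ t := (le_of_lt ht)
    have h1 : ‖Real.exp (-(y * Real.cosh t)) * g t‖
        ≤ Real.exp (-(y * Real.cosh t)) * Real.exp (b*t) := by
      rw [norm_mul, Real.norm_eq_abs, Real.norm_eq_abs, Real.abs_exp]
      exact mul_le_mul_of_nonneg_left (hb t ht0) (Real.exp_pos _).le
    rw [← Real.exp_add] at h1
    calc ‖Real.exp (-(y * Real.cosh t)) * g t‖ ≤ _ := h1
      _ ≤ Real.exp (2*(b+1)^2/y) * Real.exp (-t) := key_bound y b t hy ht0
      _ = Real.exp (2*(b+1)^2/y) * Real.exp (-1*t) := by norm_num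

lemma cosh_pow_mul_cosh_le (s t : ℝ) (ht : 0 ≤ t) (k : ℕ) :
    Real.cosh t ^ k * Real.cosh (s*t) ≤ Real.exp ((k + |s|)*t) := by
  have h1 : Real.cosh t ^ k ≤ Real.exp t ^ k := by
    apply pow_le_pow_left₀ (Real.cosh_pos t).le
    simpa [abs_of_nonneg ht] using cosh_le_exp_abs t
  have h2 : Real.cosh (s*t) ≤ Real.exp (abs s * t) := by
    have := cosh_le_exp_abs (s*t)
    rwa [abs_mul, abs_of_nonneg ht] at this
  calc Real.cosh t ^ k * Real.cosh (s*t) ≤ Real.exp t ^ k * Real.exp (abs s * t) :=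
        mul_le_mul h1 h2 (Real.cosh_pos _).le (by positivity)
    _ = Real.exp ((k + |s|)*t) := by
        rw [← Real.exp_nat_mul, ← Real.exp_add]; ring_nf

noncomputable def Jf (s : ℝ) (k : ℕ) (y : ℝ) : ℝ :=
  ∫ t in Set.Ioi (0:ℝ), Real.exp (-(y * Real.cosh t)) * (Real.cosh t ^ k * Real.cosh (s*t))

noncomputable def Tf (s y : ℝ) : ℝ :=
  ∫ t in Set.Ioi (0:ℝ), Real.exp (-(y * Real.cosh t)) * (Real.sinh t * Real.sinh (s*t))

noncomputable def Sf (s y : ℝ) : ℝ :=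
  ∫ t in Set.Ioi (0:ℝ), Real.exp (-(y * Real.cosh t)) * (Real.sinh t ^ 2 * Real.cosh (s*t))

lemma Jf_integrable (s : ℝ) (k : ℕ) {y : ℝ} (hy : 0 < y) :
    IntegrableOn (fun t => Real.exp (-(y * Real.cosh t)) *
      (Real.cosh t ^ k * Real.cosh (s*t))) (Ioi 0) := by
  refine integrable_aux y (k + |s|) hy (by continuity) (fun t ht => ?_)
  rw [abs_of_nonneg (by positivity)]
  exact cosh_pow_mul_cosh_le s t ht k

lemma Tf_integrable (s : ℝ) {y : ℝ} (hy : 0 < y) :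
    IntegrableOn (fun t => Real.exp (-(y * Real.cosh t)) *
      (Real.sinh t * Real.sinh (s*t))) (Ioi 0) := by
  refine integrable_aux y (1 + |s|) hy (by continuity) (fun t ht => ?_)
  calc |Real.sinh t * Real.sinh (s*t)| = |Real.sinh t| * |Real.sinh (s*t)| := abs_mul _ _
    _ ≤ Real.cosh t * Real.cosh (s*t) :=
        mul_le_mul (abs_sinh_le_cosh t) (abs_sinh_le_cosh _) (abs_nonneg _) (Real.cosh_pos _).le
    _ ≤ Real.exp ((1 + |s|)*t) := by
        have := cosh_pow_mul_cosh_le s t ht 1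
        simpa using this

lemma Sf_integrable (s : ℝ) {y : ℝ} (hy : 0 < y) :
    IntegrableOn (fun t => Real.exp (-(y * Real.cosh t)) *
      (Real.sinh t ^ 2 * Real.cosh (s*t))) (Ioi 0) := by
  refine integrable_aux y (2 + |s|) hy (by continuity) (fun t ht => ?_)
  calc |Real.sinh t ^ 2 * Real.cosh (s*t)| = |Real.sinh t|^2 * Real.cosh (s*t) := by
        rw [abs_mul, abs_of_nonneg (Real.cosh_pos _).le, abs_pow]
    _ ≤ Real.cosh t ^ 2 * Real.cosh (s*t) := by
        apply mul_le_mul_of_nonneg_right _ (Real.cosh_pos _).le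
        exact pow_le_pow_left₀ (abs_nonneg _) (abs_sinh_le_cosh t) 2
    _ ≤ Real.exp ((2 + |s|)*t) := by
        have := cosh_pow_mul_cosh_le s t ht 2
        simpa using this

lemma Jf_hasDerivAt (s : ℝ) (k : ℕ) {y : ℝ} (hy : 0 < y) :
    HasDerivAt (Jf s k) (-(Jf s (k+1) y)) y := by
  have key := hasDerivAt_integral_of_dominated_loc_of_deriv_le
    (μ := volume.restrict (Ioi (0:ℝ))) (𝕜 := ℝ)
    (F := fun x t => Real.exp (-(x * Real.cosh t)) * (Real.cosh t ^ k * Real.cosh (s*t)))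
    (F' := fun x t => -(Real.exp (-(x * Real.cosh t)) * (Real.cosh t ^ (k+1) * Real.cosh (s*t))))
    (x₀ := y) (s := Metric.ball y (y/2))
    (bound := fun t => Real.exp (-(y/2 * Real.cosh t)) * (Real.cosh t ^ (k+1) * Real.cosh (s*t)))
    (Metric.ball_mem_nhds y (half_pos hy))
    (Filter.Eventually.of_forall (fun x => (Continuous.aestronglyMeasurable (by continuity))))
    (Jf_integrable s k hy)
    (Continuous.aestronglyMeasurable (by continuity))
    ?_ (Jf_integrable s (k+1) (half_pos hy)) ?_
  · have h1 := key.2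
    have h2 : (∫ t in Ioi (0:ℝ),
        -(Real.exp (-(y * Real.cosh t)) * (Real.cosh t ^ (k+1) * Real.cosh (s*t))))
        = -(Jf s (k+1) y) := by
      rw [integral_neg]; rfl
    rw [h2] at h1
    exact h1
  · filter_upwards [ae_restrict_mem measurableSet_Ioi] with t ht x hx
    have hxpos : y/2 ≤ x := by
      have := abs_lt.1 (mem_ball_iff_norm.1 hx)
      linarith [this.1]
    have hA : (0:ℝ) ≤ Real.cosh t ^ (k+1) * Real.cosh (s*t) := by positivity
    rw [norm_neg, norm_mul, Real.norm_eq_abs, Real.abs_exp, Real.norm_eq_abs,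
      abs_of_nonneg hA]
    apply mul_le_mul_of_nonneg_right _ hA
    apply Real.exp_le_exp.2
    have := Real.cosh_pos t
    nlinarith
  · filter_upwards [ae_restrict_mem measurableSet_Ioi] with t ht x hx
    have h1 : HasDerivAt (fun x : ℝ => -(x * Real.cosh t)) (-(Real.cosh t)) x := by
      simpa using ((hasDerivAt_id x).mul_const (Real.cosh t)).fun_neg
    have h2 := (h1.exp).mul_const (Real.cosh t ^ k * Real.cosh (s*t))
    refine h2.congr_deriv ?_
    ring

lemma tendsto_aux (y b : ℝ) (hy : 0 < y) {g : ℝ → ℝ}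
    (hb : ∀ t, 0 ≤ t → |g t| ≤ Real.exp (b*t)) :
    Filter.Tendsto (fun t => Real.exp (-(y * Real.cosh t)) * g t) atTop (nhds 0) := by
  apply squeeze_zero_norm' (a := fun t => Real.exp (2*(b+1)^2/y) * Real.exp (-t))
  · filter_upwards [eventually_ge_atTop (0:ℝ)] with t ht
    calc ‖Real.exp (-(y * Real.cosh t)) * g t‖
        ≤ Real.exp (-(y * Real.cosh t)) * Real.exp (b*t) := by
          rw [norm_mul, Real.norm_eq_abs, Real.abs_exp, Real.norm_eq_abs]
          exact mul_le_mul_of_nonneg_left (hb t ht) (Real.exp_pos _).le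
      _ = Real.exp (-(y * Real.cosh t) + b*t) := (Real.exp_add _ _).symm
      _ ≤ _ := key_bound y b t hy ht
  · simpa using Real.tendsto_exp_neg_atTop_nhds_zero.const_mul (Real.exp (2*(b+1)^2/y))

lemma cosh_mul_le (s t : ℝ) (ht : 0 ≤ t) : Real.cosh (s*t) ≤ Real.exp (abs s * t) := by
  have h := cosh_pow_mul_cosh_le s t ht 0
  rw [pow_zero, one_mul] at h
  calc Real.cosh (s*t) ≤ Real.exp ((0 + abs s)*t) := by exact_mod_cast h
    _ = Real.exp (abs s * t) := by norm_num

-- y * Tf = s * Jf 0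
lemma ibp_T (s : ℝ) {y : ℝ} (hy : 0 < y) : y * Tf s y = s * Jf s 0 y := by
  set f : ℝ → ℝ := fun t => Real.exp (-(y * Real.cosh t)) * Real.sinh (s*t) with hf
  set f' : ℝ → ℝ := fun t => (-y) * (Real.exp (-(y * Real.cosh t)) * (Real.sinh t * Real.sinh (s*t)))
      + s * (Real.exp (-(y * Real.cosh t)) * (Real.cosh t ^ 0 * Real.cosh (s*t))) with hf'
  have hderiv : ∀ t ∈ Ioi (0:ℝ), HasDerivAt f (f' t) t := by
    intro t _
    have h1 : HasDerivAt (fun t : ℝ => -(y * Real.cosh t)) (-(y * Real.sinh t)) t := by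
      simpa using ((Real.hasDerivAt_cosh t).const_mul y).fun_neg
    have h2 : HasDerivAt (fun t : ℝ => Real.sinh (s*t)) (Real.cosh (s*t) * s) t := by
      simpa using ((hasDerivAt_id t).const_mul s).sinh
    have h3 := (h1.exp).mul h2
    refine h3.congr_deriv ?_
    simp only [hf']; ring
  have hint : IntegrableOn f' (Ioi (0:ℝ)) :=
    ((Tf_integrable s hy).const_mul _).add ((Jf_integrable s 0 hy).const_mul _)
  have htend : Filter.Tendsto f atTop (nhds 0) := by
    apply tendsto_aux y (abs s) hy
    intro t ht
    calc |Real.sinh (s*t)| ≤ Real.cosh (s*t) := abs_sinh_le_cosh _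
      _ ≤ Real.exp (abs s * t) := cosh_mul_le s t ht
  have hcont : ContinuousWithinAt f (Ici (0:ℝ)) 0 := (Continuous.continuousWithinAt (by continuity))
  have key := integral_Ioi_of_hasDerivAt_of_tendsto hcont hderiv hint htend
  have hf0 : f 0 = 0 := by simp [hf]
  rw [hf0, sub_zero] at key
  have hsplit : (∫ t in Ioi (0:ℝ), f' t)
      = (-y) * Tf s y + s * Jf s 0 y := by
    simp only [hf']
    rw [integral_add ((Tf_integrable s hy).const_mul _) ((Jf_integrable s 0 hy).const_mul _),
      integral_const_mul, integral_const_mul]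
    rfl
  rw [key] at hsplit
  linarith

-- y * Sf = Jf 1 + s * Tf
lemma ibp_S (s : ℝ) {y : ℝ} (hy : 0 < y) : y * Sf s y = Jf s 1 y + s * Tf s y := by
  set f : ℝ → ℝ := fun t => Real.exp (-(y * Real.cosh t)) * (Real.sinh t * Real.cosh (s*t)) with hf
  set f' : ℝ → ℝ := fun t =>
      (-y) * (Real.exp (-(y * Real.cosh t)) * (Real.sinh t ^ 2 * Real.cosh (s*t)))
      + Real.exp (-(y * Real.cosh t)) * (Real.cosh t ^ 1 * Real.cosh (s*t))
      + s * (Real.exp (-(y * Real.cosh t)) * (Real.sinh t * Real.sinh (s*t))) with hf'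
  have hderiv : ∀ t ∈ Ioi (0:ℝ), HasDerivAt f (f' t) t := by
    intro t _
    have h1 : HasDerivAt (fun t : ℝ => -(y * Real.cosh t)) (-(y * Real.sinh t)) t := by
      simpa using ((Real.hasDerivAt_cosh t).const_mul y).fun_neg
    have h2 : HasDerivAt (fun t : ℝ => Real.cosh (s*t)) (Real.sinh (s*t) * s) t := by
      simpa using ((hasDerivAt_id t).const_mul s).cosh
    have h3 := (h1.exp).mul ((Real.hasDerivAt_sinh t).mul h2)
    refine h3.congr_deriv ?_
    simp only [hf', Pi.mul_apply]; ring
  have hint : IntegrableOn f' (Ioi (0:ℝ)) :=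
    (((Sf_integrable s hy).const_mul _).add (Jf_integrable s 1 hy)).add
      ((Tf_integrable s hy).const_mul _)
  have htend : Filter.Tendsto f atTop (nhds 0) := by
    apply tendsto_aux y (1 + abs s) hy
    intro t ht
    calc |Real.sinh t * Real.cosh (s*t)| = |Real.sinh t| * Real.cosh (s*t) := by
          rw [abs_mul, abs_of_nonneg (Real.cosh_pos _).le]
      _ ≤ Real.cosh t * Real.cosh (s*t) :=
          mul_le_mul_of_nonneg_right (abs_sinh_le_cosh t) (Real.cosh_pos _).le
      _ ≤ Real.exp ((1 + abs s)*t) := by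
          have h := cosh_pow_mul_cosh_le s t ht 1
          rw [pow_one] at h
          exact_mod_cast h
  have hcont : ContinuousWithinAt f (Ici (0:ℝ)) 0 := (Continuous.continuousWithinAt (by continuity))
  have key := integral_Ioi_of_hasDerivAt_of_tendsto hcont hderiv hint htend
  have hf0 : f 0 = 0 := by simp [hf]
  rw [hf0, sub_zero] at key
  have hsplit : (∫ t in Ioi (0:ℝ), f' t)
      = ((-y) * Sf s y + Jf s 1 y) + s * Tf s y := by
    have hu : IntegrableOn (fun t => (-y) * (Real.exp (-(y * Real.cosh t)) * (Real.sinh t ^ 2 * Real.cosh (s*t)))) (Ioi (0:ℝ)) :=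
      (Sf_integrable s hy).const_mul _
    have hv : IntegrableOn (fun t => Real.exp (-(y * Real.cosh t)) * (Real.cosh t ^ 1 * Real.cosh (s*t))) (Ioi (0:ℝ)) :=
      Jf_integrable s 1 hy
    have hw : IntegrableOn (fun t => s * (Real.exp (-(y * Real.cosh t)) * (Real.sinh t * Real.sinh (s*t)))) (Ioi (0:ℝ)) :=
      (Tf_integrable s hy).const_mul _
    have huv : IntegrableOn (fun t => (-y) * (Real.exp (-(y * Real.cosh t)) * (Real.sinh t ^ 2 * Real.cosh (s*t)))
        + Real.exp (-(y * Real.cosh t)) * (Real.cosh t ^ 1 * Real.cosh (s*t))) (Ioi (0:ℝ)) := hu.add hv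
    simp only [hf']
    rw [integral_add huv hw, integral_add hu hv, integral_const_mul, integral_const_mul]
    rfl
  rw [key] at hsplit
  linarith

-- Jf (s-1) 0 = Jf s 1 - Tf s
lemma Jf_shift (s : ℝ) {y : ℝ} (hy : 0 < y) : Jf (s-1) 0 y = Jf s 1 y - Tf s y := by
  have hpt : (fun t => Real.exp (-(y * Real.cosh t)) * (Real.cosh t ^ 0 * Real.cosh ((s-1)*t)))
      = fun t => Real.exp (-(y * Real.cosh t)) * (Real.cosh t ^ 1 * Real.cosh (s*t))
        - Real.exp (-(y * Real.cosh t)) * (Real.sinh t * Real.sinh (s*t)) := by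
    funext t
    have h : (s-1)*t = s*t - t := by ring
    rw [h, Real.cosh_sub]
    ring
  rw [Jf, hpt, integral_sub (Jf_integrable s 1 hy) (Tf_integrable s hy)]
  rfl

-- Jf 2 = Jf 0 + Sf
lemma Jf_two (s : ℝ) {y : ℝ} (hy : 0 < y) : Jf s 2 y = Jf s 0 y + Sf s y := by
  have hpt : (fun t => Real.exp (-(y * Real.cosh t)) * (Real.cosh t ^ 2 * Real.cosh (s*t)))
      = fun t => Real.exp (-(y * Real.cosh t)) * (Real.cosh t ^ 0 * Real.cosh (s*t))
        + Real.exp (-(y * Real.cosh t)) * (Real.sinh t ^ 2 * Real.cosh (s*t)) := by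
    funext t
    have h := Real.cosh_sq_sub_sinh_sq t
    linear_combination (Real.exp (-(y * Real.cosh t)) * Real.cosh (s*t)) * h
  rw [Jf, hpt, integral_add (Jf_integrable s 0 hy) (Sf_integrable s hy)]
  rfl

noncomputable def Gd (s y : ℝ) : ℝ :=
  2^(1-s)/Real.Gamma s * (s * y^(s-1) * Jf s 0 y + y^s * -(Jf s 1 y))

noncomputable def Hd (s y : ℝ) : ℝ :=
  2^(1-s)/Real.Gamma s *
    (s*(s-1)*y^(s-2)*Jf s 0 y - 2*s*y^(s-1)*Jf s 1 y + y^s*Jf s 2 y)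

lemma psi_eq (s : ℝ) {z : ℝ} (hz : 0 < z) :
    psi s z = 2^(1-s)/Real.Gamma s * (z^s * Jf s 0 z) := by
  rw [psi, if_neg (ne_of_gt hz), abs_of_pos hz]
  have hb : besselK s z = Jf s 0 z := by simp [besselK, Jf]
  rw [hb]; ring

lemma psi_eventuallyEq (s : ℝ) {y : ℝ} (hy : 0 < y) :
    psi s =ᶠ[nhds y] fun z => 2^(1-s)/Real.Gamma s * (z^s * Jf s 0 z) := by
  filter_upwards [Ioi_mem_nhds hy] with z hz
  exact psi_eq s hz

lemma psi_hasDerivAt (s : ℝ) {y : ℝ} (hy : 0 < y) : HasDerivAt (psi s) (Gd s y) y := by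
  have h1 : HasDerivAt (fun z : ℝ => z^s) (s*y^(s-1)) y :=
    Real.hasDerivAt_rpow_const (Or.inl hy.ne')
  have h2 := Jf_hasDerivAt s 0 hy
  have h3 := (h1.mul h2).const_mul ((2:ℝ)^(1-s)/Real.Gamma s)
  refine HasDerivAt.congr_of_eventuallyEq ?_ (psi_eventuallyEq s hy)
  exact h3

lemma Gd_hasDerivAt (s : ℝ) {y : ℝ} (hy : 0 < y) : HasDerivAt (Gd s) (Hd s y) y := by
  have h1 : HasDerivAt (fun z : ℝ => z^(s-1)) ((s-1)*y^(s-1-1)) y :=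
    Real.hasDerivAt_rpow_const (Or.inl hy.ne')
  have h2 := Jf_hasDerivAt s 0 hy
  have h3 : HasDerivAt (fun z : ℝ => z^s) (s*y^(s-1)) y :=
    Real.hasDerivAt_rpow_const (Or.inl hy.ne')
  have h4 := Jf_hasDerivAt s 1 hy
  have hC := (((h1.const_mul s).mul h2).add (h3.mul h4.neg)).const_mul
    ((2:ℝ)^(1-s)/Real.Gamma s)
  have hGd : HasDerivAt (Gd s)
      ((2:ℝ)^(1-s)/Real.Gamma s *
        (s * ((s-1)*y^(s-1-1)) * Jf s 0 y + s * y^(s-1) * -(Jf s 1 y)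
          + (s*y^(s-1) * -(Jf s 1 y) + y^s * -(-(Jf s 2 y))))) y := by
    exact hC
  convert hGd using 1
  simp only [Hd]
  rw [show s-1-1 = s-2 by ring]; ring

theorem psi_second_order_eq_of_one_lt' (s : ℝ) (hs : 1 < s) :
    ∀ y : ℝ, 0 < y →
      DifferentiableAt ℝ (psi s) y ∧
      DifferentiableAt ℝ (deriv (psi s)) y ∧
      -(deriv (deriv (psi s)) y) + psi s y
        = (2 * s - 1) / (2 * (s - 1)) * psi (s - 1) y := by
  intro y hy
  have hG := psi_hasDerivAt s hy
  have hev : deriv (psi s) =ᶠ[nhds y] Gd s := by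
    filter_upwards [Ioi_mem_nhds hy] with z hz
    exact (psi_hasDerivAt s hz).deriv
  have hGd := Gd_hasDerivAt s hy
  refine ⟨hG.differentiableAt, (hGd.congr_of_eventuallyEq hev).differentiableAt, ?_⟩
  have hd2 : deriv (deriv (psi s)) y = Hd s y := by
    rw [hev.deriv_eq]
    exact hGd.deriv
  rw [hd2, psi_eq s hy, psi_eq (s-1) hy, Jf_shift s hy]
  -- algebraic facts
  have hs1 : s - 1 ≠ 0 := by linarith
  have hΓ1 : Real.Gamma (s-1) ≠ 0 := (Real.Gamma_pos_of_pos (by linarith)).ne'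
  have hΓ : Real.Gamma s = (s-1) * Real.Gamma (s-1) := by
    have h := Real.Gamma_add_one hs1
    rw [show s-1+1 = s by ring] at h
    exact h
  have h2pow : (2:ℝ)^(1-(s-1)) = 2^(1-s) * 2 := by
    rw [show (1-(s-1) : ℝ) = (1-s) + 1 by ring, Real.rpow_add_one (by norm_num : (2:ℝ) ≠ 0)]
  have e1 : y^(s-1) = y^(s-2) * y := by
    rw [show (s-1 : ℝ) = (s-2) + 1 by ring, Real.rpow_add_one hy.ne']
  have e2 : y^s = y^(s-1) * y := by
    have h := Real.rpow_add_one hy.ne' (s-1)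
    rw [show s-1+1 = s by ring] at h
    exact h
  have hS := ibp_S s hy
  have hT := ibp_T s hy
  have hJ2 := Jf_two s hy
  have key1 : -( s*(s-1)*y^(s-2)*Jf s 0 y - 2*s*y^(s-1)*Jf s 1 y + y^s*Jf s 2 y )
      + y^s*Jf s 0 y = (2*s-1) * (y^(s-1) * (Jf s 1 y - Tf s y)) := by
    rw [hJ2, e2, e1]
    linear_combination (-(y^(s-2)*y))*hS + (y^(s-2)*(s-1))*hT
  have hc : (2*s-1) * ((2:ℝ)^(1-s)/Real.Gamma s)
      = (2*s-1)/(2*(s-1)) * ((2:ℝ)^(1-(s-1))/Real.Gamma (s-1)) := by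
    rw [h2pow, hΓ]
    field_simp
  simp only [Hd]
  linear_combination ((2:ℝ)^(1-s)/Real.Gamma s) * key1
    + (y^(s-1)*(Jf s 1 y - Tf s y)) * hc

/-- final theorem -/
theorem psi_second_order_eq_of_one_lt (s : ℝ) (hs : 1 < s) :
    ∀ y : ℝ, 0 < y →
      DifferentiableAt ℝ (psi s) y ∧
      DifferentiableAt ℝ (deriv (psi s)) y ∧
      -(deriv (deriv (psi s)) y) + psi s y
        = (2 * s - 1) / (2 * (s - 1)) * psi (s - 1) y := by
  exact psi_second_order_eq_of_one_lt' s hs
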